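/- The truncated Seiberg–Witten map of the deformed abelian Chern–Simons theory intertwines the field equations up to third order in the deformation: for every smooth vector field A: ℝ³ → ℝ³, the two polynomials in t (with smooth vector-field coefficients) F̂ₜ( Âₜ(A) ) and (curl A)·( 1 − t(v·A) + ½t²(v·A)² ) have equal coefficients in t-degrees 0, 1 and 2. -/

import Mathlib

/- STATEMENT 8: the truncated Seiberg–Witten map intertwines the field
equations up to third order in t: F̂ₜ(Âₜ(A)) and
(curl A)·(1 − t(v·A) + ½t²(v·A)²) agree in t-degrees 0, 1 and 2. -/

noncomputable section

abbrev V3 := Fin 3 → ℝ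

/-- Partial derivative ∂_i f at x. -/
def pd (f : V3 → ℝ) (i : Fin 3) (x : V3) : ℝ :=
  fderiv ℝ f x (Pi.single i 1)

/-- Levi-Civita symbol ε_{abc} on Fin 3. -/
def eps (a b c : Fin 3) : ℝ :=
  (((b : ℕ) : ℝ) - ((a : ℕ) : ℝ)) * (((c : ℕ) : ℝ) - ((b : ℕ) : ℝ)) *
    (((c : ℕ) : ℝ) - ((a : ℕ) : ℝ)) / 2

/-- (curl A)_a = Σ_{b,c} ε_{abc} ∂_b A_c. -/
def curl (A : V3 → V3) (a : Fin 3) (x : V3) : ℝ :=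
  ∑ b, ∑ c, eps a b c * pd (fun y => A y c) b x

/-- Truncated Seiberg–Witten field redefinition
  Âₜ(A) = A − t(v·A)A + ½t²(v·A)²A. -/
def hatA (v : V3) (t : ℝ) (A : V3 → V3) : V3 → V3 :=
  fun x a => A x a - t * (∑ i, v i * A x i) * A x a
    + (1 / 2) * t ^ 2 * (∑ i, v i * A x i) ^ 2 * A x a

/-- Truncated deformed field equation
  F̂ₜ(B)_a = Σ_{b,c} ε_{abc}( ∂_bB_c + t Σ_i v_i ∂_bB_i B_c
    + 2t² Σ_{i,j} v_iv_j ∂_bB_i B_j B_c ). -/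
def hatF (v : V3) (t : ℝ) (B : V3 → V3) (x : V3) (a : Fin 3) : ℝ :=
  ∑ b, ∑ c, eps a b c *
    (pd (fun y => B y c) b x
      + t * ∑ i, v i * pd (fun y => B y i) b x * B x c
      + 2 * t ^ 2 * ∑ i, ∑ j, v i * v j * pd (fun y => B y i) b x * B x j * B x c)

/-- v·A. -/
def Ssum (v : V3) (A : V3 → V3) (x : V3) : ℝ := ∑ i, v i * A x i

/-- E_a = Σ_{b,c} ε_{abc} (Σ_i v_i ∂_b A_i) A_c. -/
def Efield (v : V3) (A : V3 → V3) (x : V3) (a : Fin 3) : ℝ :=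
  ∑ b, ∑ c, eps a b c * (∑ i, v i * pd (fun y => A y i) b x) * A x c

/-- The error coefficients: cₖ = κₖ s^(k-1) E, nonzero only for 3 ≤ k ≤ 8. -/
def swCoeff (v : V3) (A : V3 → V3) : ℕ → V3 → V3
  | 3 => fun x a => (-4) * Ssum v A x ^ 2 * Efield v A x a
  | 4 => fun x a => (25/2) * Ssum v A x ^ 3 * Efield v A x a
  | 5 => fun x a => (-(61/4)) * Ssum v A x ^ 4 * Efield v A x a
  | 6 => fun x a => (21/2) * Ssum v A x ^ 5 * Efield v A x a
  | 7 => fun x a => (-4) * Ssum v A x ^ 6 * Efield v A x a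
  | 8 => fun x a => (3/4) * Ssum v A x ^ 7 * Efield v A x a
  | _ => 0

lemma pd_contDiff (A : V3 → V3) (hA : ContDiff ℝ (⊤ : ℕ∞) A) (j b : Fin 3) :
    ContDiff ℝ (⊤ : ℕ∞) (fun x => pd (fun y => A y j) b x) :=
  ((contDiff_pi.mp hA j).fderiv_right (by simp)).clm_apply contDiff_const

/-- Product rule for the components of Âₜ(A). -/
lemma pd_hatA (v : V3) (A : V3 → V3) (hA : ContDiff ℝ (⊤ : ℕ∞) A) (t : ℝ)
    (x : V3) (b c : Fin 3) :
    pd (fun y => hatA v t A y c) b x =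
      (1 - t * (∑ i, v i * A x i) + (1/2) * t^2 * (∑ i, v i * A x i)^2)
          * pd (fun y => A y c) b x
      + (-t + t^2 * (∑ i, v i * A x i))
          * (∑ i, v i * pd (fun y => A y i) b x) * A x c := by
  have hAc : ∀ j, DifferentiableAt ℝ (fun y => A y j) x :=
    fun j => differentiableAt_pi.mp (hA.differentiable (by simp) x) j
  have hS : DifferentiableAt ℝ (fun y => ∑ i, v i * A y i) x :=
    DifferentiableAt.fun_sum (fun i _ => (hAc i).const_mul (v i))
  have hc' : HasFDerivAt (fun y => A y c) (fderiv ℝ (fun y => A y c) x) x :=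
    (hAc c).hasFDerivAt
  have hS' : HasFDerivAt (fun y => ∑ i, v i * A y i)
      (fderiv ℝ (fun y => ∑ i, v i * A y i) x) x := hS.hasFDerivAt
  have hq : fderiv ℝ (fun y => ∑ i, v i * A y i) x (Pi.single b 1)
      = ∑ i, v i * pd (fun y => A y i) b x := by
    rw [fderiv_fun_sum (fun i _ => (hAc i).const_mul (v i))]
    rw [ContinuousLinearMap.sum_apply]
    refine Finset.sum_congr rfl fun i _ => ?_
    rw [fderiv_const_mul (hAc i) (v i)]
    simp [pd]
  have hfun : (fun y => hatA v t A y c) =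
      fun y => A y c - t * (∑ i, v i * A y i) * A y c
        + (1/2) * t^2 * ((∑ i, v i * A y i) * (∑ i, v i * A y i)) * A y c := by
    funext y; simp only [hatA]; ring
  have H := ((hc'.fun_sub ((hS'.const_mul t).fun_mul hc')).fun_add
      (((hS'.fun_mul hS').const_mul ((1/2)*t^2)).fun_mul hc'))
  rw [pd, hfun, H.fderiv]
  simp only [ContinuousLinearMap.add_apply, ContinuousLinearMap.sub_apply,
    ContinuousLinearMap.smul_apply, smul_eq_mul, hq]
  show _ = _ * pd (fun y => A y c) b x + _
  rw [pd]
  ring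

/-- Pulling a contracted index out of a single sum. -/
lemma sum3_lin (v p a : Fin 3 → ℝ) (U Wq X : ℝ) :
    ∑ i, v i * (U * p i + Wq * a i) * X
      = (U * (∑ i, v i * p i) + Wq * (∑ i, v i * a i)) * X := by
  calc ∑ i, v i * (U * p i + Wq * a i) * X
      = ∑ i, (U * (v i * p i) + Wq * (v i * a i)) * X :=
        Finset.sum_congr rfl (fun i _ => by ring)
    _ = (∑ i, (U * (v i * p i) + Wq * (v i * a i))) * X := by rw [← Finset.sum_mul]
    _ = _ := by rw [Finset.sum_add_distrib, ← Finset.mul_sum, ← Finset.mul_sum]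

/-- Pulling two contracted indices out of a double sum. -/
lemma sum33_lin (v p a : Fin 3 → ℝ) (U Wq Y X : ℝ) :
    ∑ i, ∑ j, v i * v j * (U * p i + Wq * a i) * (Y * a j) * X
      = (U * (∑ i, v i * p i) + Wq * (∑ i, v i * a i))
          * (∑ j, v j * a j) * Y * X := by
  calc ∑ i, ∑ j, v i * v j * (U * p i + Wq * a i) * (Y * a j) * X
      = ∑ i, (v i * (U * p i + Wq * a i) * (Y * X)) * ∑ j, v j * a j := by
        refine Finset.sum_congr rfl fun i _ => ?_
        rw [Finset.mul_sum]
        exact Finset.sum_congr rfl fun j _ => by ring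
    _ = (∑ i, v i * (U * p i + Wq * a i) * (Y * X)) * ∑ j, v j * a j := by
        rw [← Finset.sum_mul]
    _ = _ := by rw [sum3_lin]; ring

theorem truncated_SW_intertwines_field_equations
    (v : V3) (A : V3 → V3) (hA : ContDiff ℝ (⊤ : ℕ∞) A) :
    ∃ (N : ℕ) (c : ℕ → V3 → V3),
      (∀ k, ContDiff ℝ (⊤ : ℕ∞) (c k)) ∧
      (∀ (t : ℝ) (x : V3) (a : Fin 3),
        hatF v t (hatA v t A) x a
          - curl A a x *
              (1 - t * (∑ i, v i * A x i)
                + (1 / 2) * t ^ 2 * (∑ i, v i * A x i) ^ 2)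
        = ∑ k ∈ Finset.range (N + 1), c k x a * t ^ k) ∧
      c 0 = 0 ∧ c 1 = 0 ∧ c 2 = 0 := by
  have hs : ContDiff ℝ (⊤ : ℕ∞) (Ssum v A) :=
    ContDiff.sum fun i _ => contDiff_const.mul (contDiff_pi.mp hA i)
  have hE : ContDiff ℝ (⊤ : ℕ∞) (fun x => Efield v A x) := by
    refine contDiff_pi.mpr fun a => ?_
    refine ContDiff.sum fun b _ => ContDiff.sum fun c _ => ?_
    exact ((contDiff_const.mul
      (ContDiff.sum fun i _ => contDiff_const.mul (pd_contDiff A hA i b))).mul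
      (contDiff_pi.mp hA c))
  have hsm : ∀ (r : ℝ) (n : ℕ), ContDiff ℝ (⊤ : ℕ∞)
      (fun x (a : Fin 3) => r * Ssum v A x ^ n * Efield v A x a) := by
    intro r n
    refine contDiff_pi.mpr fun a => ?_
    exact (contDiff_const.mul (hs.pow n)).mul ((contDiff_pi.mp hE a))
  refine ⟨8, swCoeff v A, ?_, ?_, rfl, rfl, rfl⟩
  · intro k
    match k with
    | 0 | 1 | 2 => exact contDiff_const
    | 3 => exact hsm _ _
    | 4 => exact hsm _ _
    | 5 => exact hsm _ _
    | 6 => exact hsm _ _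
    | 7 => exact hsm _ _
    | 8 => exact hsm _ _
    | (n+9) => exact contDiff_const
  · intro t x a
    have key := pd_hatA v A hA t x
    have hB : ∀ c, hatA v t A x c =
        (1 - t * (∑ i, v i * A x i) + (1/2) * t^2 * (∑ i, v i * A x i)^2)
          * A x c := by
      intro c; simp only [hatA]; ring
    have hSs : Ssum v A x = ∑ i, v i * A x i := rfl
    have hmain : hatF v t (hatA v t A) x a
        = (1 - t * (∑ i, v i * A x i) + (1/2) * t^2 * (∑ i, v i * A x i)^2)
            * curl A a x
          + ((-t + t^2 * Ssum v A x)
              + t * ((1 - t * Ssum v A x + (1/2) * t^2 * Ssum v A x^2)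
                  + (-t + t^2 * Ssum v A x) * Ssum v A x)
                * (1 - t * Ssum v A x + (1/2) * t^2 * Ssum v A x^2)
              + 2 * t^2 * ((1 - t * Ssum v A x + (1/2) * t^2 * Ssum v A x^2)
                  + (-t + t^2 * Ssum v A x) * Ssum v A x)
                * Ssum v A x
                * (1 - t * Ssum v A x + (1/2) * t^2 * Ssum v A x^2)^2)
            * Efield v A x a := by
      have step1 : hatF v t (hatA v t A) x a
          = ∑ b, ∑ c,
              ((1 - t * (∑ i, v i * A x i) + (1/2) * t^2 * (∑ i, v i * A x i)^2)
                  * (eps a b c * pd (fun y => A y c) b x)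
                + ((-t + t^2 * Ssum v A x)
                    + t * ((1 - t * Ssum v A x + (1/2) * t^2 * Ssum v A x^2)
                        + (-t + t^2 * Ssum v A x) * Ssum v A x)
                      * (1 - t * Ssum v A x + (1/2) * t^2 * Ssum v A x^2)
                    + 2 * t^2 * ((1 - t * Ssum v A x + (1/2) * t^2 * Ssum v A x^2)
                        + (-t + t^2 * Ssum v A x) * Ssum v A x)
                      * Ssum v A x
                      * (1 - t * Ssum v A x + (1/2) * t^2 * Ssum v A x^2)^2)
                  * (eps a b c * (∑ i, v i * pd (fun y => A y i) b x) * A x c)) := by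
        simp only [hatF, key, hB]
        refine Finset.sum_congr rfl fun b _ => ?_
        refine Finset.sum_congr rfl fun c _ => ?_
        rw [sum3_lin, sum33_lin, hSs]
        ring
      rw [step1, curl, Efield]
      simp only [Finset.sum_add_distrib, ← Finset.mul_sum]
    rw [hmain]
    have h3 : swCoeff v A 3 = fun x a => (-4) * Ssum v A x ^ 2 * Efield v A x a := rfl
    have h4 : swCoeff v A 4 = fun x a => (25/2) * Ssum v A x ^ 3 * Efield v A x a := rfl
    have h5 : swCoeff v A 5 = fun x a => (-(61/4)) * Ssum v A x ^ 4 * Efield v A x a := rfl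
    have h6 : swCoeff v A 6 = fun x a => (21/2) * Ssum v A x ^ 5 * Efield v A x a := rfl
    have h7 : swCoeff v A 7 = fun x a => (-4) * Ssum v A x ^ 6 * Efield v A x a := rfl
    have h8 : swCoeff v A 8 = fun x a => (3/4) * Ssum v A x ^ 7 * Efield v A x a := rfl
    have h0 : swCoeff v A 0 = 0 := rfl
    have h1 : swCoeff v A 1 = 0 := rfl
    have h2 : swCoeff v A 2 = 0 := rfl
    simp only [Finset.sum_range_succ, Finset.sum_range_zero,
      h0, h1, h2, h3, h4, h5, h6, h7, h8, Pi.zero_apply]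
    rw [← hSs]
    ring
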